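/- Let (S, M) and (B, B ∩ M) be reduced Noetherian local rings with B ⊆ S and \widehat{B} = \widehat{S}, such that the map f : Spec(S) → Spec(B), f(P) = P ∩ B, is surjective and satisfies f(P)S = P for every prime P of S of positive height. If P₁ ∩ B ⊇ P₂ ∩ B for primes P₁, P₂ of S, then there exists a prime Q of S with Q ⊆ P₁ and Q ∩ B = P₂ ∩ B. -/

import Mathlib

open TensorProduct

/-- If `T` is a flat `A`-algebra, `q` a prime of `A`, `a ∉ q`, then multiplication by
`a` is injective modulo `qT`. -/
lemma flat_smul_mem_map {A T : Type*} [CommRing A] [CommRing T] [Algebra A T]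
    [Module.Flat A T] (q : Ideal A) (hq : q.IsPrime) (a : A) (ha : a ∉ q) (t : T)
    (h : algebraMap A T a * t ∈ q.map (algebraMap A T)) : t ∈ q.map (algebraMap A T) := by
  let e := quotTensorEquivQuotSMul T q
  have hμ : Function.Injective ((a • LinearMap.id : (A ⧸ q) →ₗ[A] (A ⧸ q))) := by
    rw [← LinearMap.ker_eq_bot, eq_bot_iff]
    intro x hx
    obtain ⟨b, rfl⟩ := Submodule.Quotient.mk_surjective q x
    simp only [LinearMap.mem_ker, LinearMap.smul_apply, LinearMap.id_coe, id_eq] at hx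
    rw [← Submodule.Quotient.mk_smul, Submodule.Quotient.mk_eq_zero, smul_eq_mul] at hx
    rw [Submodule.mem_bot, Submodule.Quotient.mk_eq_zero]
    exact (hq.mem_or_mem hx).resolve_left ha
  have h2 : Function.Injective
      (LinearMap.rTensor T (a • LinearMap.id : (A ⧸ q) →ₗ[A] (A ⧸ q))) :=
    Module.Flat.rTensor_preserves_injective_linearMap _ hμ
  have h3 : ∀ z : (A ⧸ q) ⊗[A] T,
      LinearMap.rTensor T (a • LinearMap.id : (A ⧸ q) →ₗ[A] (A ⧸ q)) z = a • z := by
    intro z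
    induction z using TensorProduct.induction_on with
    | zero => simp
    | tmul x y => simp [TensorProduct.smul_tmul']
    | add x y hx hy => rw [map_add, hx, hy, smul_add]
  have hmk : a • (Submodule.Quotient.mk t : T ⧸ (q • ⊤ : Submodule A T)) = 0 := by
    rw [← Submodule.Quotient.mk_smul, Submodule.Quotient.mk_eq_zero, Ideal.smul_top_eq_map,
      Submodule.restrictScalars_mem, Algebra.smul_def]
    exact h
  have hz : a • e.symm (Submodule.Quotient.mk t) = 0 := by
    rw [← map_smul, hmk, map_zero]
  have h0 : e.symm (Submodule.Quotient.mk t) = 0 := h2 (by rw [h3, hz, map_zero])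
  have : (Submodule.Quotient.mk t : T ⧸ (q • ⊤ : Submodule A T)) = 0 := by
    have := congrArg e h0
    rwa [e.apply_symm_apply, map_zero] at this
  rw [Submodule.Quotient.mk_eq_zero, Ideal.smul_top_eq_map,
    Submodule.restrictScalars_mem] at this
  exact this

/-- Going-down for flat algebras. -/
lemma goingDown_of_flat {A T : Type*} [CommRing A] [CommRing T] [Algebra A T]
    [Module.Flat A T] (q q₁ : Ideal A) (hq : q.IsPrime) (hle : q ≤ q₁)
    (P : Ideal T) (hP : P.IsPrime) (hcomap : P.comap (algebraMap A T) = q₁) :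
    ∃ Q : Ideal T, Q.IsPrime ∧ Q ≤ P ∧ Q.comap (algebraMap A T) = q := by
  have h1q : (1 : A) ∉ q := (Ideal.ne_top_iff_one q).mp hq.ne_top
  have h1P : (1 : T) ∉ P := (Ideal.ne_top_iff_one P).mp hP.ne_top
  set f := algebraMap A T with hf
  let W : Submonoid T :=
    { carrier := {x | ∃ a, a ∉ q ∧ ∃ t, t ∉ P ∧ x = f a * t}
      one_mem' := ⟨1, h1q, 1, h1P, by simp⟩
      mul_mem' := by
        rintro x y ⟨a, ha, t, ht, rfl⟩ ⟨a', ha', t', ht', rfl⟩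
        refine ⟨a * a', fun hm => ((hq.mem_or_mem hm).elim ha ha'),
          t * t', fun hm => ((hP.mem_or_mem hm).elim ht ht'), by rw [map_mul]; ring⟩ }
  have hmapP : q.map f ≤ P := Ideal.map_le_iff_le_comap.mpr (hle.trans hcomap.ge)
  have hdisj : Disjoint ((q.map f : Ideal T) : Set T) (W : Set T) := by
    rw [Set.disjoint_left]
    rintro x hx ⟨a, ha, t, ht, rfl⟩
    exact ht (hmapP (flat_smul_mem_map q hq a ha t hx))
  obtain ⟨Q, hQ, hleQ, hQdisj⟩ := Ideal.exists_le_prime_disjoint (q.map f) W hdisj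
  refine ⟨Q, hQ, ?_, ?_⟩
  · intro x hx
    by_contra hxP
    exact Set.disjoint_left.mp hQdisj hx ⟨1, h1q, x, hxP, by simp⟩
  · refine le_antisymm ?_ (Ideal.map_le_iff_le_comap.mp hleQ)
    intro a haQ
    by_contra haq
    exact Set.disjoint_left.mp hQdisj haQ ⟨a, haq, 1, h1P, by simp⟩

/-- Lying over for faithfully flat algebras. -/
lemma lyingOver_of_faithfullyFlat {A T : Type*} [CommRing A] [CommRing T] [Algebra A T]
    [Module.FaithfullyFlat A T] (q : Ideal A) (hq : q.IsPrime) :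
    ∃ P : Ideal T, P.IsPrime ∧ P.comap (algebraMap A T) = q := by
  have h1q : (1 : A) ∉ q := (Ideal.ne_top_iff_one q).mp hq.ne_top
  set f := algebraMap A T with hf
  let W : Submonoid T :=
    { carrier := {x | ∃ a, a ∉ q ∧ x = f a}
      one_mem' := ⟨1, h1q, by simp⟩
      mul_mem' := by
        rintro x y ⟨a, ha, rfl⟩ ⟨a', ha', rfl⟩
        exact ⟨a * a', fun hm => ((hq.mem_or_mem hm).elim ha ha'), by rw [map_mul]⟩ }
  have hdisj : Disjoint ((q.map f : Ideal T) : Set T) (W : Set T) := by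
    rw [Set.disjoint_left]
    rintro x hx ⟨a, ha, rfl⟩
    have h1 : (1 : T) ∈ q.map f :=
      flat_smul_mem_map q hq a ha 1 (by rwa [mul_one])
    have hmt : q.map f = ⊤ := (Ideal.eq_top_iff_one _).mpr h1
    have : q = ⊤ := by
      refine (Module.FaithfullyFlat.iff_flat_and_ideal_smul_eq_top A T).mp
        inferInstance |>.2 q ?_
      rw [Ideal.smul_top_eq_map, hmt]
      rfl
    exact hq.ne_top this
  obtain ⟨P, hP, hleP, hPdisj⟩ := Ideal.exists_le_prime_disjoint (q.map f) W hdisj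
  refine ⟨P, hP, le_antisymm ?_ (Ideal.map_le_iff_le_comap.mp hleP)⟩
  intro a haP
  by_contra haq
  exact Set.disjoint_left.mp hPdisj haP ⟨a, haq, rfl⟩

/-- The adic completion at an ideal containing all maximal ideals is faithfully flat. -/
lemma faithfullyFlat_adicCompletion {R : Type*} [CommRing R] [IsNoetherianRing R]
    (I : Ideal R) (hItop : I ≠ ⊤) (hI : ∀ m : Ideal R, m.IsMaximal → m ≤ I) :
    Module.FaithfullyFlat R (AdicCompletion I R) := by
  haveI fl : Module.Flat R (AdicCompletion I R) := inferInstance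
  refine ⟨fun m hm htop => ?_⟩
  rw [Ideal.smul_top_eq_map] at htop
  have hmt : m.map (algebraMap R (AdicCompletion I R)) = ⊤ := by
    have := congrArg (fun p : Submodule R (AdicCompletion I R) => ((1 : AdicCompletion I R) ∈ p))
      htop
    simp only [Submodule.restrictScalars_mem, Submodule.mem_top, eq_iff_iff, iff_true] at this
    exact (Ideal.eq_top_iff_one _).mpr this
  let g := (AdicCompletion.evalₐ I 1).toRingHom
  have h1 : (1 : R ⧸ I ^ 1) ∈ (m.map (algebraMap R (AdicCompletion I R))).map g := by
    rw [hmt]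
    simpa using Ideal.mem_map_of_mem g (Submodule.mem_top (x := (1 : AdicCompletion I R)))
  rw [Ideal.map_map] at h1
  have hcomp : g.comp (algebraMap R (AdicCompletion I R)) = algebraMap R (R ⧸ I ^ 1) :=
    RingHom.ext fun x => (AdicCompletion.evalₐ I 1).commutes x
  rw [hcomp] at h1
  have hbot : m.map (algebraMap R (R ⧸ I ^ 1)) ≤ ⊥ := by
    rw [Ideal.map_le_iff_le_comap]
    intro x hx
    simp only [Ideal.mem_comap, Submodule.mem_bot, Ideal.Quotient.algebraMap_eq]
    exact Ideal.Quotient.eq_zero_iff_mem.mpr (by rw [pow_one]; exact hI m hm hx)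
  haveI : Nontrivial (R ⧸ I ^ 1) := Ideal.Quotient.nontrivial_iff.mpr (by rwa [pow_one])
  exact one_ne_zero (hbot h1)

/-- Let `(S, M)` and `(B, B ∩ M)` be reduced Noetherian local rings with
`B ⊆ S` and `B̂ = Ŝ`, such that `f : Spec S → Spec B`, `f(P) = P ∩ B`, is
surjective and satisfies `f(P)S = P` for every prime `P` of `S` of positive
height.  If `P₁ ∩ B ⊇ P₂ ∩ B` for primes `P₁, P₂` of `S`, then there exists a
prime `Q` of `S` with `Q ⊆ P₁` and `Q ∩ B = P₂ ∩ B`. -/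
theorem exists_prime_below_of_comap_le
    {B S : Type*} [CommRing B] [CommRing S] [Algebra B S]
    [IsNoetherianRing B] [IsNoetherianRing S] [IsLocalRing B] [IsLocalRing S]
    [IsReduced B] [IsReduced S]
    (hinj : Function.Injective (algebraMap B S))
    (e : AdicCompletion (IsLocalRing.maximalIdeal B) B ≃+*
      AdicCompletion (IsLocalRing.maximalIdeal S) S)
    (he : ∀ b : B,
      e (algebraMap B (AdicCompletion (IsLocalRing.maximalIdeal B) B) b) =
        algebraMap S (AdicCompletion (IsLocalRing.maximalIdeal S) S) (algebraMap B S b))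
    (hsurj : ∀ q : Ideal B, q.IsPrime →
      ∃ P : Ideal S, ∃ _ : P.IsPrime, P.comap (algebraMap B S) = q)
    (hext : ∀ P : Ideal S, (hP : P.IsPrime) →
      0 < Order.height (⟨P, hP⟩ : PrimeSpectrum S) →
      (P.comap (algebraMap B S)).map (algebraMap B S) = P)
    (P₁ P₂ : Ideal S) (h₁ : P₁.IsPrime) (h₂ : P₂.IsPrime)
    (h : P₂.comap (algebraMap B S) ≤ P₁.comap (algebraMap B S)) :
    ∃ Q : Ideal S, Q.IsPrime ∧ Q ≤ P₁ ∧
      Q.comap (algebraMap B S) = P₂.comap (algebraMap B S) := by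
  letI : Algebra B (AdicCompletion (IsLocalRing.maximalIdeal S) S) :=
    ((algebraMap S (AdicCompletion (IsLocalRing.maximalIdeal S) S)).comp
      (algebraMap B S)).toAlgebra
  have halg : algebraMap B (AdicCompletion (IsLocalRing.maximalIdeal S) S) =
      (algebraMap S (AdicCompletion (IsLocalRing.maximalIdeal S) S)).comp
        (algebraMap B S) := rfl
  letI : Module B (AdicCompletion (IsLocalRing.maximalIdeal S) S) := Algebra.toModule
  letI : SMul B (AdicCompletion (IsLocalRing.maximalIdeal S) S) := Algebra.toSMul
  haveI ffS : Module.FaithfullyFlat S (AdicCompletion (IsLocalRing.maximalIdeal S) S) :=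
    faithfullyFlat_adicCompletion _ (IsLocalRing.maximalIdeal.isMaximal S).ne_top
      (fun m hm => le_of_eq (IsLocalRing.eq_maximalIdeal hm))
  obtain ⟨Ph, hPh, hPhc⟩ := lyingOver_of_faithfullyFlat
    (T := AdicCompletion (IsLocalRing.maximalIdeal S) S) P₁ h₁
  haveI flB : Module.Flat B (AdicCompletion (IsLocalRing.maximalIdeal B) B) := inferInstance
  let el : AdicCompletion (IsLocalRing.maximalIdeal B) B ≃ₗ[B]
      AdicCompletion (IsLocalRing.maximalIdeal S) S :=
    e.toAddEquiv.toLinearEquiv (fun b x => by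
      show e (b • x) = b • e x
      rw [Algebra.smul_def, Algebra.smul_def, map_mul, he b, halg]
      rfl)
  haveI : Module.Flat B (AdicCompletion (IsLocalRing.maximalIdeal S) S) :=
    Module.Flat.of_linearEquiv el.symm
  have hPhcB : Ph.comap (algebraMap B (AdicCompletion (IsLocalRing.maximalIdeal S) S)) =
      P₁.comap (algebraMap B S) := by
    rw [halg, ← Ideal.comap_comap, hPhc]
  haveI := h₂
  have hq : (P₂.comap (algebraMap B S)).IsPrime := Ideal.IsPrime.comap _
  obtain ⟨Qh, hQh, hQhle, hQhc⟩ := goingDown_of_flat (A := B)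
    (P₂.comap (algebraMap B S)) (P₁.comap (algebraMap B S)) hq h Ph hPh hPhcB
  haveI := hQh
  refine ⟨Qh.comap (algebraMap S (AdicCompletion (IsLocalRing.maximalIdeal S) S)),
    Ideal.IsPrime.comap _, ?_, ?_⟩
  · have := Ideal.comap_mono
      (f := algebraMap S (AdicCompletion (IsLocalRing.maximalIdeal S) S)) hQhle
    rwa [hPhc] at this
  · rw [Ideal.comap_comap, ← halg, hQhc]
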